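/- Let F : F_{2^n} → F_{2^n} be APN with F(0) = 0, let ε ∈ F_{2^n} with ε ≠ 0, and let F' be the (0,ε)-modification of F (so x_0 = 0 and y_0 = F(0) = 0). Then F' is APN if and only if Σ_{a,b ∈ F_{2^n}} W_F(a,b)^3 · (−1)^{Tr(b·ε)} = 0. -/

import Mathlib

open scoped Classical

noncomputable instance (n : ℕ) : Fintype (GaloisField 2 n) := Fintype.ofFinite _

/-- The absolute trace of `F_{2^n}` over `F_2`. -/
noncomputable def fieldTr (n : ℕ) (x : GaloisField 2 n) : ZMod 2 :=
  Algebra.trace (ZMod 2) (GaloisField 2 n) x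

/-- `(-1)^{Tr(x)}` as an integer. -/
noncomputable def chi (n : ℕ) (x : GaloisField 2 n) : ℤ :=
  (-1) ^ (fieldTr n x).val

lemma zmod2_pow_add : ∀ a b : ZMod 2,
    ((-1 : ℤ)) ^ (a + b).val = (-1) ^ a.val * (-1) ^ b.val := by decide

lemma zmod2_ne_zero : ∀ {t : ZMod 2}, t ≠ 0 → t = 1 := by decide

lemma chi_add (n : ℕ) (x y : GaloisField 2 n) : chi n (x + y) = chi n x * chi n y := by
  unfold chi fieldTr
  rw [map_add, zmod2_pow_add]

lemma chi_sum_eq (n : ℕ) (s : GaloisField 2 n) :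
    ∑ x : GaloisField 2 n, chi n (s * x) =
      if s = 0 then (Fintype.card (GaloisField 2 n) : ℤ) else 0 := by
  split_ifs with hs
  · subst hs
    simp [chi, fieldTr, Finset.card_univ]
  · have hnd := traceForm_nondegenerate (ZMod 2) (GaloisField 2 n) |>.1 s
    have : ∃ y, Algebra.trace (ZMod 2) (GaloisField 2 n) (s * y) ≠ 0 := by
      by_contra hf
      push_neg at hf
      exact hs (hnd (by simpa [Algebra.traceForm_apply] using hf))
    obtain ⟨y, hy⟩ := this
    have hchiy : chi n (s * y) = -1 := by
      unfold chi fieldTr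
      rw [zmod2_ne_zero hy]
      rfl
    have key : ∑ x : GaloisField 2 n, chi n (s * x) =
        ∑ x : GaloisField 2 n, chi n (s * (x + y)) :=
      (Fintype.sum_equiv (Equiv.addRight y) _ _ (fun x => rfl)).symm
    have h2 : ∑ x : GaloisField 2 n, chi n (s * x) =
        -∑ x : GaloisField 2 n, chi n (s * x) := by
      nth_rewrite 1 [key]
      rw [← Finset.sum_neg_distrib]
      refine Finset.sum_congr rfl fun x _ => ?_
      rw [mul_add, chi_add, hchiy]; ring
    linarith

/-- The Walsh transform `W_F(a,b)`. -/
noncomputable def walsh (n : ℕ) (F : GaloisField 2 n → GaloisField 2 n)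
    (a b : GaloisField 2 n) : ℤ :=
  ∑ x : GaloisField 2 n, chi n (b * F x + a * x)

/-- `F` is almost perfect nonlinear. -/
def IsAPN (n : ℕ) (F : GaloisField 2 n → GaloisField 2 n) : Prop :=
  ∀ a b : GaloisField 2 n, a ≠ 0 →
    Nat.card {x : GaloisField 2 n // F (x + a) + F x = b} ≤ 2

/-- `F` is partially APN at the point `x₀`. -/
def IsPAPN (n : ℕ) (F : GaloisField 2 n → GaloisField 2 n) (x₀ : GaloisField 2 n) : Prop :=
  ∀ u v : GaloisField 2 n, F x₀ + F u + F v + F (x₀ + u + v) = 0 →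
    (x₀ + u) * (x₀ + v) * (u + v) = 0

/-- The `(x₀, ε)`-modification of `F`. -/
noncomputable
def pointModify (n : ℕ) (F : GaloisField 2 n → GaloisField 2 n) (x₀ ε : GaloisField 2 n) :
    GaloisField 2 n → GaloisField 2 n :=
  fun x => if x = x₀ then F x₀ + ε else F x

/-- `E_F(a,b) = (-1)^{Tr(a x₀ + b y₀)} (1 - (-1)^{Tr(b ε)})`. -/
noncomputable def EF (n : ℕ) (F : GaloisField 2 n → GaloisField 2 n)
    (x₀ ε a b : GaloisField 2 n) : ℤ :=
  chi n (a * x₀ + b * F x₀) * (1 - chi n (b * ε))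

section helpers

variable {M : Type*} [AddCommMonoid M]

lemma move_in3 {α β γ : Type*} [Fintype α] [Fintype β] [Fintype γ] (f : α → β → γ → M) :
    ∑ a : α, ∑ x : β, ∑ y : γ, f a x y = ∑ x : β, ∑ y : γ, ∑ a : α, f a x y := by
  rw [Finset.sum_comm]
  exact Finset.sum_congr rfl fun x _ => Finset.sum_comm

lemma move_in4 {α β γ δ : Type*} [Fintype α] [Fintype β] [Fintype γ] [Fintype δ]
    (f : α → β → γ → δ → M) :
    ∑ a : α, ∑ x : β, ∑ y : γ, ∑ z : δ, f a x y z
      = ∑ x : β, ∑ y : γ, ∑ z : δ, ∑ a : α, f a x y z := by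
  rw [Finset.sum_comm]
  exact Finset.sum_congr rfl fun x _ => move_in3 (fun a => f a x)

lemma move_in5 {α β γ δ ι : Type*} [Fintype α] [Fintype β] [Fintype γ] [Fintype δ] [Fintype ι]
    (f : α → β → γ → δ → ι → M) :
    ∑ a : α, ∑ x : β, ∑ y : γ, ∑ z : δ, ∑ w : ι, f a x y z w
      = ∑ x : β, ∑ y : γ, ∑ z : δ, ∑ w : ι, ∑ a : α, f a x y z w := by
  rw [Finset.sum_comm]
  exact Finset.sum_congr rfl fun x _ => move_in4 (fun a => f a x)

end helpers

section main

variable (n : ℕ)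

local notation "G" => GaloisField 2 n

lemma gf_add_self (x : G) : x + x = 0 := CharTwo.add_self_eq_zero x

lemma expand_cube (F : G → G) (ε : G) (a b : G) : walsh n F a b ^ 3 * chi n (b * ε)
    = ∑ x : G, ∑ y : G, ∑ z : G,
        chi n (a * (x + y + z)) * chi n (b * (F x + F y + F z + ε)) := by
  have h3 : walsh n F a b ^ 3
      = ∑ x : G, ∑ y : G, ∑ z : G,
          chi n (b * F x + a * x) * (chi n (b * F y + a * y) * chi n (b * F z + a * z)) := by
    rw [pow_succ, pow_two, walsh, Finset.sum_mul_sum, Finset.sum_mul]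
    refine Finset.sum_congr rfl fun x _ => ?_
    rw [Finset.sum_mul_sum]
    refine Finset.sum_congr rfl fun y _ => Finset.sum_congr rfl fun z _ => by ring
  rw [h3, Finset.sum_mul]
  refine Finset.sum_congr rfl fun x _ => ?_
  rw [Finset.sum_mul]
  refine Finset.sum_congr rfl fun y _ => ?_
  rw [Finset.sum_mul]
  refine Finset.sum_congr rfl fun z _ => ?_
  calc chi n (b * F x + a * x) * (chi n (b * F y + a * y) * chi n (b * F z + a * z))
        * chi n (b * ε)
      = chi n (b * F x + a * x) * (chi n (b * F y + a * y) *
          (chi n (b * F z + a * z) * chi n (b * ε))) := by ring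
    _ = chi n ((b * F x + a * x) + ((b * F y + a * y) + ((b * F z + a * z) + b * ε))) := by
        rw [← chi_add n (b * F z + a * z) (b * ε),
            ← chi_add n (b * F y + a * y) ((b * F z + a * z) + b * ε),
            ← chi_add n (b * F x + a * x)]
    _ = chi n (a * (x + y + z) + b * (F x + F y + F z + ε)) := by ring_nf
    _ = chi n (a * (x + y + z)) * chi n (b * (F x + F y + F z + ε)) :=
        chi_add n _ _


lemma step1 (F : G → G) (ε : G) :
    ∑ a : G, ∑ b : G, walsh n F a b ^ 3 * chi n (b * ε)
      = ∑ a : G, ∑ b : G, ∑ x : G, ∑ y : G, ∑ z : G,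
          chi n (a * (x + y + z)) * chi n (b * (F x + F y + F z + ε)) :=
  Finset.sum_congr rfl fun a _ => Finset.sum_congr rfl fun b _ => expand_cube n F ε a b

lemma step2 (F : G → G) (ε : G) :
    ∑ a : G, ∑ b : G, ∑ x : G, ∑ y : G, ∑ z : G,
          chi n (a * (x + y + z)) * chi n (b * (F x + F y + F z + ε))
      = ∑ x : G, ∑ y : G, ∑ z : G, ∑ a : G, ∑ b : G,
          chi n (a * (x + y + z)) * chi n (b * (F x + F y + F z + ε)) :=
  (move_in5 (fun a b x y z => chi n (a * (x + y + z)) * chi n (b * (F x + F y + F z + ε)))).trans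
    (move_in5 (fun b x y z a => chi n (a * (x + y + z)) * chi n (b * (F x + F y + F z + ε))))

lemma step3 (F : G → G) (ε : G) :
    ∑ x : G, ∑ y : G, ∑ z : G, ∑ a : G, ∑ b : G,
          chi n (a * (x + y + z)) * chi n (b * (F x + F y + F z + ε))
     = ∑ x : G, ∑ y : G, ∑ z : G,
          (if z = x + y then (Fintype.card G : ℤ) else 0) *
          (if F x + F y + F z + ε = 0 then (Fintype.card G : ℤ) else 0) := by
  refine Finset.sum_congr rfl fun x _ => Finset.sum_congr rfl fun y _ =>
    Finset.sum_congr rfl fun z _ => ?_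
  rw [← Finset.sum_mul_sum]
  have h1 : ∑ a : G, chi n (a * (x + y + z))
      = if z = x + y then (Fintype.card G : ℤ) else 0 := by
    rw [Finset.sum_congr rfl fun a _ => congrArg (chi n) (mul_comm a (x + y + z)),
        chi_sum_eq]
    congr 1
    simp only [eq_iff_iff]
    constructor
    · intro h
      rw [eq_neg_of_add_eq_zero_right h, CharTwo.neg_eq]
    · intro h; subst h; exact gf_add_self n (x + y)
  have h2 : ∑ b : G, chi n (b * (F x + F y + F z + ε))
      = if F x + F y + F z + ε = 0 then (Fintype.card G : ℤ) else 0 := by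
    rw [Finset.sum_congr rfl fun b _ =>
        congrArg (chi n) (mul_comm b (F x + F y + F z + ε)), chi_sum_eq]
  rw [h1, h2]

lemma step4 (F : G → G) (ε : G) :
    ∑ x : G, ∑ y : G, ∑ z : G,
          (if z = x + y then (Fintype.card G : ℤ) else 0) *
          (if F x + F y + F z + ε = 0 then (Fintype.card G : ℤ) else 0)
     = ∑ x : G, ∑ y : G,
          (if F x + F y + F (x + y) = ε then (Fintype.card G : ℤ) ^ 2 else 0) := by
  refine Finset.sum_congr rfl fun x _ => Finset.sum_congr rfl fun y _ => ?_
  rw [Finset.sum_eq_single (x + y)]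
  · rw [if_pos rfl]
    have hiff : (F x + F y + F (x + y) + ε = 0) ↔ (F x + F y + F (x + y) = ε) := by
      constructor
      · intro h
        have h' := eq_neg_of_add_eq_zero_left h
        rwa [CharTwo.neg_eq] at h'
      · intro h; rw [h, gf_add_self n]
    rw [if_congr hiff rfl rfl]
    split_ifs <;> ring
  · intro z _ hz; rw [if_neg hz, zero_mul]
  · intro h; exact absurd (Finset.mem_univ _) h

lemma step5 (F : G → G) (ε : G) :
    ∑ x : G, ∑ y : G,
          (if F x + F y + F (x + y) = ε then (Fintype.card G : ℤ) ^ 2 else 0)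
    = (Fintype.card G : ℤ) ^ 2 *
        ((Finset.univ.filter
          (fun p : G × G => F p.1 + F p.2 + F (p.1 + p.2) = ε)).card : ℤ) := by
  have e1 : ∑ p : G × G,
      (if F p.1 + F p.2 + F (p.1 + p.2) = ε then (Fintype.card G : ℤ) ^ 2 else 0)
      = ∑ x : G, ∑ y : G,
        (if F x + F y + F (x + y) = ε then (Fintype.card G : ℤ) ^ 2 else 0) :=
    Fintype.sum_prod_type
      (fun p : G × G => if F p.1 + F p.2 + F (p.1 + p.2) = ε then (Fintype.card G : ℤ) ^ 2 else 0)
  rw [← e1, ← Finset.sum_filter, Finset.sum_const, nsmul_eq_mul, mul_comm]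

/-- The key counting identity. -/
lemma sum_cube_eq (F : G → G) (ε : G) :
    ∑ a : G, ∑ b : G, walsh n F a b ^ 3 * chi n (b * ε)
      = (Fintype.card G : ℤ) ^ 2 *
        ((Finset.univ.filter
          (fun p : G × G => F p.1 + F p.2 + F (p.1 + p.2) = ε)).card : ℤ) :=
  ((((step1 n F ε).trans (step2 n F ε)).trans (step3 n F ε)).trans (step4 n F ε)).trans
    (step5 n F ε)

/-- The sum vanishes iff no pair `(x,y)` satisfies `F x + F y + F (x+y) = ε`. -/
lemma sum_eq_zero_iff (F : G → G) (ε : G) :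
    (∑ a : G, ∑ b : G, walsh n F a b ^ 3 * chi n (b * ε) = 0)
      ↔ ∀ x y : G, F x + F y + F (x + y) ≠ ε := by
  rw [sum_cube_eq]
  have hq : (0 : ℤ) < (Fintype.card G : ℤ) ^ 2 := by
    positivity
  constructor
  · intro h x y hxy
    have hcard : ((Finset.univ.filter
        (fun p : G × G => F p.1 + F p.2 + F (p.1 + p.2) = ε)).card : ℤ) = 0 := by
      rcases mul_eq_zero.mp h with h' | h'
      · exact absurd h' (ne_of_gt hq)
      · exact h'
    have : ((x, y) : G × G) ∈ Finset.univ.filter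
        (fun p : G × G => F p.1 + F p.2 + F (p.1 + p.2) = ε) := by
      simp [hxy]
    have hc : (Finset.univ.filter
        (fun p : G × G => F p.1 + F p.2 + F (p.1 + p.2) = ε)).card = 0 := by
      exact_mod_cast hcard
    rw [Finset.card_eq_zero] at hc
    rw [hc] at this
    exact absurd this (Finset.notMem_empty _)
  · intro h
    have : (Finset.univ.filter
        (fun p : G × G => F p.1 + F p.2 + F (p.1 + p.2) = ε)) = ∅ := by
      rw [Finset.filter_eq_empty_iff]
      intro p _
      exact h p.1 p.2
    rw [this]
    simp


lemma pm_zero (F : G → G) (ε : G) (h0 : F 0 = 0) : pointModify n F 0 ε 0 = ε := by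
  simp [pointModify, h0]

lemma pm_ne (F : G → G) (ε : G) {x : G} (hx : x ≠ 0) : pointModify n F 0 ε x = F x := by
  simp [pointModify, hx]

lemma natcard_eq (P : G → Prop) : Nat.card {x : G // P x} = Set.ncard {x : G | P x} := rfl

lemma apn_modify_iff (F : G → G) (hF : IsAPN n F) (h0 : F 0 = 0) (ε : G) (hε : ε ≠ 0) :
    IsAPN n (pointModify n F 0 ε) ↔ ∀ x y : G, F x + F y + F (x + y) ≠ ε := by
  have h2 : (2 : G) = 0 := CharTwo.two_eq_zero
  have pmz : pointModify n F 0 ε 0 = ε := pm_zero n F ε h0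
  have pmn : ∀ x : G, x ≠ 0 → pointModify n F 0 ε x = F x := fun x hx => pm_ne n F ε hx
  constructor
  · intro hA x y hxy
    have hx0 : x ≠ 0 := by
      rintro rfl
      rw [zero_add] at hxy
      exact hε (by linear_combination h0 + F y * h2 - hxy)
    have hy0 : y ≠ 0 := by
      rintro rfl
      rw [add_zero] at hxy
      exact hε (by linear_combination h0 + F x * h2 - hxy)
    have hxney : x ≠ y := by
      rintro rfl
      rw [show x + x = 0 by linear_combination x * h2] at hxy
      exact hε (by linear_combination h0 + F x * h2 - hxy)
    have ha : x + y ≠ 0 := fun h => hxney (by linear_combination h - y * h2)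
    have h0mem : pointModify n F 0 ε (0 + (x + y)) + pointModify n F 0 ε 0
        = F (x + y) + ε := by
      rw [zero_add, pmz, pmn _ ha]
    have hamem : pointModify n F 0 ε ((x + y) + (x + y)) + pointModify n F 0 ε (x + y)
        = F (x + y) + ε := by
      rw [show (x + y) + (x + y) = 0 by linear_combination (x + y) * h2, pmz, pmn _ ha]
      ring
    have hxmem : pointModify n F 0 ε (x + (x + y)) + pointModify n F 0 ε x
        = F (x + y) + ε := by
      rw [show x + (x + y) = y by linear_combination x * h2, pmn _ hy0, pmn _ hx0]
      linear_combination hxy - F (x + y) * h2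
    have hxnea : x ≠ x + y := fun h => hy0 (by linear_combination -h)
    have hsub : ({0, x + y, x} : Set G) ⊆
        {u : G | pointModify n F 0 ε (u + (x + y)) + pointModify n F 0 ε u
          = F (x + y) + ε} := by
      rintro u (rfl | rfl | rfl)
      · exact h0mem
      · exact hamem
      · exact hxmem
    have hcard3 : ({0, x + y, x} : Set G).ncard = 3 := by
      rw [Set.ncard_insert_of_notMem (by simp [Ne.symm ha, Ne.symm hx0]) (Set.toFinite _),
          Set.ncard_pair (Ne.symm hxnea)]
    have hle := Set.ncard_le_ncard hsub (Set.toFinite _)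
    have hAa := hA (x + y) (F (x + y) + ε) ha
    rw [natcard_eq] at hAa
    rw [hcard3] at hle
    omega
  · intro H a b ha
    rw [natcard_eq]
    by_cases hb : b = F a + ε
    · have hset : {u : G | pointModify n F 0 ε (u + a) + pointModify n F 0 ε u = b}
          = {0, a} := by
        ext u
        simp only [Set.mem_setOf_eq, Set.mem_insert_iff, Set.mem_singleton_iff]
        constructor
        · intro hu
          by_contra hcon
          push_neg at hcon
          obtain ⟨hu0, hua⟩ := hcon
          have hua' : u + a ≠ 0 := fun h => hua (by linear_combination h - a * h2)
          rw [pmn _ hua', pmn _ hu0] at hu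
          exact absurd (by
            rw [show u + (u + a) = a by linear_combination u * h2]
            rw [hb] at hu
            linear_combination hu + F a * h2) (H u (u + a))
        · rintro (rfl | rfl)
          · rw [zero_add, pmz, pmn _ ha, hb]
          · rw [show u + u = 0 by linear_combination u * h2, pmz, pmn _ ha, hb]
            ring
      rw [hset, Set.ncard_pair (Ne.symm ha)]
    · have hsub : {u : G | pointModify n F 0 ε (u + a) + pointModify n F 0 ε u = b}
          ⊆ {u : G | F (u + a) + F u = b} := by
        intro u hu
        simp only [Set.mem_setOf_eq] at hu ⊢
        have hu0 : u ≠ 0 := by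
          rintro rfl
          rw [zero_add, pmz, pmn _ ha] at hu
          exact hb hu.symm
        have hua : u + a ≠ 0 := by
          intro h
          have huea : u = a := by linear_combination h - a * h2
          subst huea
          rw [show u + u = 0 by linear_combination u * h2, pmz, pmn _ ha] at hu
          exact hb (by linear_combination -hu)
        rwa [pmn _ hua, pmn _ hu0] at hu
      calc ({u : G | pointModify n F 0 ε (u + a) + pointModify n F 0 ε u = b}).ncard
          ≤ ({u : G | F (u + a) + F u = b}).ncard :=
            Set.ncard_le_ncard hsub (Set.toFinite _)
        _ ≤ 2 := by rw [← natcard_eq]; exact hF a b ha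

end main

theorem modification_at_zero_apn_iff (n : ℕ) (F : GaloisField 2 n → GaloisField 2 n)
    (hF : IsAPN n F) (h0 : F 0 = 0) (ε : GaloisField 2 n) (hε : ε ≠ 0) :
    IsAPN n (pointModify n F 0 ε) ↔
      ∑ a : GaloisField 2 n, ∑ b : GaloisField 2 n, walsh n F a b ^ 3 * chi n (b * ε) = 0 := by
  rw [apn_modify_iff n F hF h0 ε hε, sum_eq_zero_iff]
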